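/- Let λ ≥ 0 and let M ∈ ℝ^{n×T} have singular value decomposition M = P·diag(v₁,…,v_q)·Qᵀ with v₁ ≥ … ≥ v_q ≥ 0. Then the singular value shrinkage matrix D_λ(M) = P·diag(max(v₁−λ,0),…,max(v_q−λ,0))·Qᵀ is a global minimizer over Π̃ ∈ ℝ^{n×T} of the function Π̃ ↦ ½‖M − Π̃‖_F² + λ‖Π̃‖_*. -/

import Mathlib

set_option maxHeartbeats 1000000


open scoped BigOperators
open Matrix

/-- Frobenius norm of a real matrix. -/
noncomputable def frobeniusNorm {n T : ℕ} (A : Matrix (Fin n) (Fin T) ℝ) : ℝ :=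
  Real.sqrt (∑ i, ∑ t, (A i t) ^ 2)

/-- Singular values of a real `n × T` matrix. -/
noncomputable def singularValues {n T : ℕ} (A : Matrix (Fin n) (Fin T) ℝ) :
    Fin T → ℝ :=
  fun j => Real.sqrt ((show (Aᵀ * A).IsHermitian by
    simpa [Matrix.conjTranspose_eq_transpose_of_trivial] using
      Matrix.isHermitian_conjTranspose_mul_self A).eigenvalues j)

/-- Nuclear norm: sum of the singular values. -/
noncomputable def nuclearNorm {n T : ℕ} (A : Matrix (Fin n) (Fin T) ℝ) : ℝ :=
  ∑ j, singularValues A j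

/-- A rectangular "diagonal" matrix with entries `v 0, v 1, …` on the diagonal. -/
noncomputable def rectDiagonal (n T : ℕ) (v : ℕ → ℝ) :
    Matrix (Fin n) (Fin T) ℝ :=
  Matrix.of fun i t => if (i : ℕ) = (t : ℕ) then v i else 0

noncomputable def fip {n T : ℕ} (A B : Matrix (Fin n) (Fin T) ℝ) : ℝ :=
  ∑ i, ∑ t, A i t * B i t

lemma sum_ite_fin {N : ℕ} (t : ℕ) (c : Fin N → ℝ) :
    ∑ i : Fin N, (if (i : ℕ) = t then c i else 0)
      = if h : t < N then c ⟨t, h⟩ else 0 := by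
  split_ifs with h
  · rw [Finset.sum_eq_single ⟨t, h⟩]
    · simp
    · intro b _ hb
      rw [if_neg]
      intro hbt
      exact hb (Fin.ext hbt)
    · simp
  · apply Finset.sum_eq_zero
    intro i _
    rw [if_neg]
    have := i.2
    omega

lemma sum_ite_fin' {N : ℕ} (s : ℕ) (c : ℝ) :
    ∑ t : Fin N, (if s = (t : ℕ) then c else 0) = if s < N then c else 0 := by
  simp_rw [eq_comm (a := s)]
  rw [show (∑ t : Fin N, if (t : ℕ) = s then c else 0)
      = if h : s < N then (fun _ : Fin N => c) ⟨s, h⟩ else 0 from sum_ite_fin s _]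
  split_ifs <;> rfl

lemma sum_dite_le {n T : ℕ} (f : Fin n → ℝ) (hf : ∀ i, 0 ≤ f i) :
    ∑ t : Fin T, (if h : (t : ℕ) < n then f ⟨t, h⟩ else 0) ≤ ∑ i, f i := by
  have h1 : ∀ t : Fin T, (if h : (t : ℕ) < n then f ⟨t, h⟩ else 0)
      = ∑ i : Fin n, (if (i : ℕ) = (t : ℕ) then f i else 0) := fun t =>
    (sum_ite_fin _ _).symm
  simp_rw [h1]
  rw [Finset.sum_comm]
  apply Finset.sum_le_sum
  intro i _
  rw [sum_ite_fin' (i : ℕ) (f i)]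
  split_ifs
  · exact le_refl _
  · exact hf i

lemma fip_eq_trace {n T : ℕ} (A B : Matrix (Fin n) (Fin T) ℝ) :
    fip A B = Matrix.trace (Aᵀ * B) := by
  unfold fip
  rw [Matrix.trace]
  simp only [Matrix.diag, Matrix.mul_apply, Matrix.transpose_apply]
  rw [Finset.sum_comm]

lemma fip_PQ {n T : ℕ} (P : Matrix (Fin n) (Fin n) ℝ) (Q : Matrix (Fin T) (Fin T) ℝ)
    (hP : Pᵀ * P = 1) (hQ : Qᵀ * Q = 1)
    (A B : Matrix (Fin n) (Fin T) ℝ) :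
    fip (P * A * Qᵀ) (P * B * Qᵀ) = fip A B := by
  rw [fip_eq_trace, fip_eq_trace]
  have h1 : (P * A * Qᵀ)ᵀ * (P * B * Qᵀ) = Q * (Aᵀ * B) * Qᵀ := by
    rw [Matrix.transpose_mul, Matrix.transpose_mul, Matrix.transpose_transpose]
    simp only [← Matrix.mul_assoc]
    rw [Matrix.mul_assoc (Q * Aᵀ) Pᵀ P, hP, Matrix.mul_one]
  rw [h1, Matrix.trace_mul_cycle Q (Aᵀ * B) Qᵀ, hQ, Matrix.one_mul]

lemma fip_self_nonneg {n T : ℕ} (A : Matrix (Fin n) (Fin T) ℝ) : 0 ≤ fip A A :=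
  Finset.sum_nonneg fun i _ => Finset.sum_nonneg fun t _ => mul_self_nonneg _

lemma fip_sub_right {n T : ℕ} (A B C : Matrix (Fin n) (Fin T) ℝ) :
    fip A (B - C) = fip A B - fip A C := by
  unfold fip
  simp [Matrix.sub_apply, mul_sub, Finset.sum_sub_distrib]

lemma fip_expand {n T : ℕ} (A B C : Matrix (Fin n) (Fin T) ℝ) (h : ∀ i t, A i t = B i t + C i t) :
    fip A A = fip B B + 2 * fip B C + fip C C := by
  unfold fip
  have h2 : ∀ i t, A i t * A i t
      = B i t * B i t + 2 * (B i t * C i t) + C i t * C i t := by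
    intro i t; rw [h]; ring
  calc (∑ i, ∑ t, A i t * A i t)
      = ∑ i, ∑ t, (B i t * B i t + 2 * (B i t * C i t) + C i t * C i t) :=
        Finset.sum_congr rfl fun i _ => Finset.sum_congr rfl fun t _ => h2 i t
    _ = _ := by
        simp only [Finset.sum_add_distrib, Finset.mul_sum]

open scoped MatrixOrder in
lemma sum_sqrt_eig_eq_trace_sqrt {T : ℕ} {H : Matrix (Fin T) (Fin T) ℝ} (hH : H.PosSemidef) :
    ∑ j, Real.sqrt (hH.1.eigenvalues j) = (CFC.sqrt H).trace := by
  rw [CFC.sqrt_eq_cfc, cfc_nnreal_eq_real _ H, hH.1.cfc_eq, Matrix.IsHermitian.cfc,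
    Unitary.conjStarAlgAut_apply]
  rw [Matrix.trace_mul_cycle]
  rw [show (star hH.1.eigenvectorUnitary.1 : Matrix (Fin T) (Fin T) ℝ) *
      hH.1.eigenvectorUnitary.1 = 1 from Unitary.coe_star_mul_self hH.1.eigenvectorUnitary,
    Matrix.one_mul, Matrix.trace_diagonal]
  simp [Real.coe_sqrt, -Real.coe_toNNReal', Real.coe_toNNReal _ (hH.eigenvalues_nonneg _)]

lemma rectDiagonal_gram {n T : ℕ} (a b : ℕ → ℝ) :
    (rectDiagonal n T a)ᵀ * rectDiagonal n T b
      = Matrix.diagonal (fun t : Fin T => if (t : ℕ) < n then a t * b t else 0) := by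
  ext t t'
  simp only [Matrix.mul_apply, Matrix.transpose_apply, rectDiagonal, Matrix.of_apply,
    Matrix.diagonal_apply]
  by_cases h : t = t'
  · subst h
    simp only [if_pos rfl]
    have : ∀ i : Fin n, (if (i : ℕ) = (t : ℕ) then a i else 0) *
        (if (i : ℕ) = (t : ℕ) then b i else 0)
        = if (i : ℕ) = (t : ℕ) then a i * b i else 0 := by
      intro i; split_ifs <;> simp
    simp_rw [this]
    rw [show (∑ i : Fin n, if (i : ℕ) = (t : ℕ) then a i * b i else 0)
        = if h : (t : ℕ) < n then a ((⟨t, h⟩ : Fin n) : ℕ) * b ((⟨t, h⟩ : Fin n) : ℕ) else 0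
        from sum_ite_fin _ _]
    split_ifs <;> rfl
  · rw [if_neg h]
    apply Finset.sum_eq_zero
    intro i _
    have : ¬((i : ℕ) = (t : ℕ) ∧ (i : ℕ) = (t' : ℕ)) := by
      rintro ⟨h1, h2⟩
      exact h (Fin.ext (h1 ▸ h2 ▸ rfl))
    split_ifs with h1 h2
    · exact absurd ⟨h1, h2⟩ this
    · ring
    · ring
    · ring

open scoped MatrixOrder in
lemma nuclearNorm_eq_trace_sqrt {n T : ℕ} (A : Matrix (Fin n) (Fin T) ℝ)
    (hA : (Aᵀ * A).PosSemidef) : nuclearNorm A = (CFC.sqrt (Aᵀ * A)).trace := by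
  rw [← sum_sqrt_eig_eq_trace_sqrt hA]
  rfl

lemma posSemidef_tmul {n T : ℕ} (A : Matrix (Fin n) (Fin T) ℝ) : (Aᵀ * A).PosSemidef := by
  have := Matrix.posSemidef_conjTranspose_mul_self A
  rwa [Matrix.conjTranspose_eq_transpose_of_trivial] at this

lemma trace_conj {T : ℕ} (Q : Matrix (Fin T) (Fin T) ℝ) (hQ : Qᵀ * Q = 1)
    (X : Matrix (Fin T) (Fin T) ℝ) : Matrix.trace (Q * X * Qᵀ) = Matrix.trace X := by
  rw [Matrix.trace_mul_cycle Q X Qᵀ, hQ, Matrix.one_mul]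

open scoped MatrixOrder in
lemma nuclearNorm_PDQ {n T : ℕ} (P : Matrix (Fin n) (Fin n) ℝ) (Q : Matrix (Fin T) (Fin T) ℝ)
    (hP : Pᵀ * P = 1) (hQ : Qᵀ * Q = 1)
    (d : ℕ → ℝ) (hd : ∀ j, 0 ≤ d j) :
    nuclearNorm (P * rectDiagonal n T d * Qᵀ)
      = ∑ t : Fin T, (if (t : ℕ) < n then d t else 0) := by
  set E := P * rectDiagonal n T d * Qᵀ with hE
  set δ : Fin T → ℝ := fun t => if (t : ℕ) < n then d t * d t else 0 with hδ
  set s : Fin T → ℝ := fun t => if (t : ℕ) < n then d t else 0 with hs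
  have hgram : Eᵀ * E = Q * Matrix.diagonal δ * Qᵀ := by
    rw [hE, Matrix.transpose_mul, Matrix.transpose_mul, Matrix.transpose_transpose]
    simp only [← Matrix.mul_assoc]
    rw [Matrix.mul_assoc (Q * (rectDiagonal n T d)ᵀ) Pᵀ P, hP, Matrix.mul_one,
      Matrix.mul_assoc Q (rectDiagonal n T d)ᵀ (rectDiagonal n T d), rectDiagonal_gram]
  set S := Q * Matrix.diagonal s * Qᵀ with hSdef
  have hSpsd : S.PosSemidef := by
    have h1 : (Matrix.diagonal s).PosSemidef := by
      rw [Matrix.posSemidef_diagonal_iff]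
      intro i
      simp only [hs]
      split_ifs
      · exact hd _
      · exact le_refl 0
    have := h1.mul_mul_conjTranspose_same Q
    rwa [Matrix.conjTranspose_eq_transpose_of_trivial] at this
  have hSsq : S ^ 2 = Eᵀ * E := by
    rw [hgram, sq, hSdef]
    calc Q * Matrix.diagonal s * Qᵀ * (Q * Matrix.diagonal s * Qᵀ)
        = Q * Matrix.diagonal s * (Qᵀ * Q) * Matrix.diagonal s * Qᵀ := by
          simp only [Matrix.mul_assoc]
      _ = Q * (Matrix.diagonal s * Matrix.diagonal s) * Qᵀ := by
          rw [hQ, Matrix.mul_one]; simp only [Matrix.mul_assoc]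
      _ = Q * Matrix.diagonal δ * Qᵀ := by
          rw [Matrix.diagonal_mul_diagonal,
            show (fun i => s i * s i) = δ by
              funext t; simp only [hδ, hs]; split_ifs <;> ring]
  have hpsd : (Eᵀ * E).PosSemidef := posSemidef_tmul E
  rw [nuclearNorm_eq_trace_sqrt E hpsd]
  have hsqrt : S = CFC.sqrt (Eᵀ * E) :=
    ((CFC.sqrt_eq_iff (Eᵀ * E) S hpsd.nonneg hSpsd.nonneg).mpr (by rw [← sq]; exact hSsq)).symm
  rw [← hsqrt, hSdef, trace_conj Q hQ, Matrix.trace_diagonal]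

lemma fip_rectDiagonal_left {n T : ℕ} (m : ℕ → ℝ) (C : Matrix (Fin n) (Fin T) ℝ) :
    fip (rectDiagonal n T m) C
      = ∑ t : Fin T, (if h : (t : ℕ) < n then m t * C ⟨t, h⟩ t else 0) := by
  unfold fip
  rw [Finset.sum_comm]
  refine Finset.sum_congr rfl fun t _ => ?_
  have h1 : ∀ i : Fin n, rectDiagonal n T m i t * C i t
      = if (i : ℕ) = (t : ℕ) then m i * C i t else 0 := by
    intro i
    simp only [rectDiagonal, Matrix.of_apply]
    split_ifs <;> ring
  simp_rw [h1]
  exact sum_ite_fin (t : ℕ) (fun i : Fin n => m i * C i t)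

lemma key_sum_bound {n T : ℕ} (lam : ℝ) (hlam : 0 ≤ lam) (m : ℕ → ℝ)
    (hm0 : ∀ j, 0 ≤ m j) (hm1 : ∀ j, m j ≤ lam)
    (X : Matrix (Fin n) (Fin T) ℝ) (Y : Matrix (Fin T) (Fin T) ℝ) (μ : Fin T → ℝ)
    (hX : ∀ k, ∑ i, X i k ^ 2 = μ k) (hY : ∀ k, ∑ t, Y t k ^ 2 = 1) :
    ∑ k : Fin T, ∑ t : Fin T, (if h : (t : ℕ) < n then m t * (X ⟨t, h⟩ k * Y t k) else 0)
      ≤ lam * ∑ k, Real.sqrt (μ k) := by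
  rw [Finset.mul_sum]
  apply Finset.sum_le_sum
  intro k _
  set a : Fin T → ℝ := fun t => if h : (t : ℕ) < n then |X ⟨t, h⟩ k| else 0 with ha
  have step1 : (∑ t : Fin T, (if h : (t : ℕ) < n then m t * (X ⟨t, h⟩ k * Y t k) else 0))
      ≤ ∑ t : Fin T, lam * (a t * |Y t k|) := by
    apply Finset.sum_le_sum
    intro t _
    simp only [ha]
    split_ifs with h
    · calc m (t : ℕ) * (X ⟨t, h⟩ k * Y t k)
          ≤ m (t : ℕ) * (|X ⟨t, h⟩ k| * |Y t k|) := by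
            apply mul_le_mul_of_nonneg_left _ (hm0 _)
            calc X ⟨t, h⟩ k * Y t k ≤ |X ⟨t, h⟩ k * Y t k| := le_abs_self _
              _ = |X ⟨t, h⟩ k| * |Y t k| := abs_mul _ _
        _ ≤ lam * (|X ⟨t, h⟩ k| * |Y t k|) :=
            mul_le_mul_of_nonneg_right (hm1 _)
              (mul_nonneg (abs_nonneg _) (abs_nonneg _))
    · positivity
  have step2 : (∑ t : Fin T, a t * |Y t k|)
      ≤ Real.sqrt (∑ t, a t ^ 2) * Real.sqrt (∑ t, |Y t k| ^ 2) :=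
    Real.sum_mul_le_sqrt_mul_sqrt _ _ _
  have step3 : (∑ t, a t ^ 2) ≤ μ k := by
    rw [← hX k]
    have hsq : ∀ t : Fin T, a t ^ 2
        = (if h : (t : ℕ) < n then (fun i : Fin n => X i k ^ 2) ⟨t, h⟩ else 0) := by
      intro t
      simp only [ha]
      split_ifs with h
      · rw [sq_abs]
      · norm_num
    simp_rw [hsq]
    exact sum_dite_le (fun i : Fin n => X i k ^ 2) (fun i => sq_nonneg _)
  have step4 : (∑ t, |Y t k| ^ 2) = 1 := by
    simp_rw [sq_abs]
    exact hY k
  calc (∑ t : Fin T, (if h : (t : ℕ) < n then m t * (X ⟨t, h⟩ k * Y t k) else 0))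
      ≤ ∑ t : Fin T, lam * (a t * |Y t k|) := step1
    _ = lam * ∑ t : Fin T, a t * |Y t k| := by rw [Finset.mul_sum]
    _ ≤ lam * (Real.sqrt (∑ t, a t ^ 2) * Real.sqrt (∑ t, |Y t k| ^ 2)) :=
        mul_le_mul_of_nonneg_left step2 hlam
    _ ≤ lam * Real.sqrt (μ k) := by
        rw [step4, Real.sqrt_one, mul_one]
        exact mul_le_mul_of_nonneg_left (Real.sqrt_le_sqrt step3) hlam

lemma fip_diag_le_nuclear {n T : ℕ} (lam : ℝ) (hlam : 0 ≤ lam)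
    (P : Matrix (Fin n) (Fin n) ℝ) (Q : Matrix (Fin T) (Fin T) ℝ)
    (hP : Pᵀ * P = 1) (hP' : P * Pᵀ = 1)
    (hQ : Qᵀ * Q = 1) (hQ' : Q * Qᵀ = 1)
    (m : ℕ → ℝ) (hm0 : ∀ j, 0 ≤ m j) (hm1 : ∀ j, m j ≤ lam)
    (B : Matrix (Fin n) (Fin T) ℝ) :
    fip (P * rectDiagonal n T m * Qᵀ) B ≤ lam * nuclearNorm B := by
  classical
  have h₀ : (Bᵀ * B).IsHermitian := by
    simpa [Matrix.conjTranspose_eq_transpose_of_trivial] using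
      Matrix.isHermitian_conjTranspose_mul_self B
  have hG : (Bᵀ * B).PosSemidef := posSemidef_tmul B
  have hμ0 : ∀ k, 0 ≤ h₀.eigenvalues k := hG.eigenvalues_nonneg
  have hNB : nuclearNorm B = ∑ k, Real.sqrt (h₀.eigenvalues k) := rfl
  obtain ⟨U, hUU, hUU', hspec⟩ : ∃ U : Matrix (Fin T) (Fin T) ℝ,
      Uᵀ * U = 1 ∧ U * Uᵀ = 1 ∧
        Uᵀ * (Bᵀ * B) * U = Matrix.diagonal h₀.eigenvalues := by
    refine ⟨h₀.eigenvectorUnitary.1, ?_, ?_, ?_⟩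
    · have := Unitary.coe_star_mul_self h₀.eigenvectorUnitary
      rwa [Matrix.star_eq_conjTranspose,
        Matrix.conjTranspose_eq_transpose_of_trivial] at this
    · have := Unitary.coe_mul_star_self h₀.eigenvectorUnitary
      rwa [Unitary.coe_star, Matrix.star_eq_conjTranspose,
        Matrix.conjTranspose_eq_transpose_of_trivial] at this
    · have hs := h₀.spectral_theorem
      rw [Unitary.conjStarAlgAut_apply, Matrix.star_eq_conjTranspose,
        Matrix.conjTranspose_eq_transpose_of_trivial] at hs
      have h1 := Unitary.coe_star_mul_self h₀.eigenvectorUnitary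
      rw [Matrix.star_eq_conjTranspose, Matrix.conjTranspose_eq_transpose_of_trivial] at h1
      generalize (h₀.eigenvectorUnitary : Matrix (Fin T) (Fin T) ℝ) = U at hs h1 ⊢
      rw [show Uᵀ * (Bᵀ * B) * U = Uᵀ * (U * diagonal (RCLike.ofReal ∘ h₀.eigenvalues) * Uᵀ) * U
        from congrArg (fun X => Uᵀ * X * U) hs]
      simp only [← Matrix.mul_assoc, h1, Matrix.one_mul]
      rw [Matrix.mul_assoc, h1, Matrix.mul_one]
      ext i j
      simp [Matrix.diagonal_apply]
  -- now everything in terms of the opaque U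
  obtain ⟨μ, hμdef⟩ : ∃ μ : Fin T → ℝ, μ = h₀.eigenvalues := ⟨_, rfl⟩
  rw [hNB, ← hμdef]
  rw [← hμdef] at hspec
  obtain ⟨X, hXdef⟩ : ∃ X : Matrix (Fin n) (Fin T) ℝ, X = Pᵀ * B * U := ⟨_, rfl⟩
  obtain ⟨Y, hYdef⟩ : ∃ Y : Matrix (Fin T) (Fin T) ℝ, Y = Qᵀ * U := ⟨_, rfl⟩
  have hXcol : ∀ k, ∑ i, X i k ^ 2 = μ k := by
    intro k
    have h1 : Xᵀ * X = Matrix.diagonal μ := by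
      rw [hXdef, Matrix.transpose_mul, Matrix.transpose_mul, Matrix.transpose_transpose]
      calc Uᵀ * (Bᵀ * P) * (Pᵀ * B * U)
          = Uᵀ * Bᵀ * (P * Pᵀ) * B * U := by simp only [Matrix.mul_assoc]
        _ = Uᵀ * (Bᵀ * B) * U := by rw [hP', Matrix.mul_one]; simp only [Matrix.mul_assoc]
        _ = Matrix.diagonal μ := hspec
    have h2 : (Xᵀ * X) k k = ∑ i, X i k ^ 2 := by
      simp [Matrix.mul_apply, sq]
    rw [← h2, h1, Matrix.diagonal_apply_eq]
  have hYcol : ∀ k, ∑ t, Y t k ^ 2 = 1 := by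
    intro k
    have h1 : Yᵀ * Y = 1 := by
      rw [hYdef, Matrix.transpose_mul, Matrix.transpose_transpose]
      calc Uᵀ * Q * (Qᵀ * U) = Uᵀ * (Q * Qᵀ) * U := by simp only [Matrix.mul_assoc]
        _ = 1 := by rw [hQ', Matrix.mul_one, hUU]
    have h2 : (Yᵀ * Y) k k = ∑ t, Y t k ^ 2 := by
      simp [Matrix.mul_apply, sq]
    rw [← h2, h1, Matrix.one_apply_eq]
  have hPBQ : Pᵀ * B * Q = X * Yᵀ := by
    rw [hXdef, hYdef, Matrix.transpose_mul, Matrix.transpose_transpose]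
    calc Pᵀ * B * Q = Pᵀ * B * (U * Uᵀ) * Q := by rw [hUU', Matrix.mul_one]
      _ = Pᵀ * B * U * (Uᵀ * Q) := by simp only [Matrix.mul_assoc]
  have hfip : fip (P * rectDiagonal n T m * Qᵀ) B = fip (rectDiagonal n T m) (Pᵀ * B * Q) := by
    rw [fip_eq_trace, fip_eq_trace]
    rw [Matrix.transpose_mul, Matrix.transpose_mul, Matrix.transpose_transpose]
    rw [← Matrix.trace_mul_cycle ((rectDiagonal n T m)ᵀ * Pᵀ) B Q]
    simp only [Matrix.mul_assoc]
  rw [hfip, fip_rectDiagonal_left]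
  have hterm : ∀ t : Fin T, (if h : (t : ℕ) < n then m t * (Pᵀ * B * Q) ⟨t, h⟩ t else 0)
      = ∑ k, (if h : (t : ℕ) < n then m t * (X ⟨t, h⟩ k * Y t k) else 0) := by
    intro t
    split_ifs with h
    · rw [hPBQ, Matrix.mul_apply, Finset.mul_sum]
      refine Finset.sum_congr rfl fun k _ => by rw [Matrix.transpose_apply]
    · simp
  simp_rw [hterm]
  rw [Finset.sum_comm]
  exact key_sum_bound lam hlam m hm0 hm1 X Y μ hXcol hYcol

/-- singular value shrinkage / thresholding: let `λ ≥ 0` and let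
`M = P·diag(v₁,…,v_q)·Qᵀ` be a singular value decomposition of `M ∈ ℝ^{n×T}`
(`P`, `Q` orthogonal, `v` nonnegative and decreasing).  Then
`D_λ(M) = P·diag(max(v_j−λ,0))·Qᵀ` is a global minimizer over `Π̃` of
`Π̃ ↦ ½‖M − Π̃‖_F² + λ‖Π̃‖_*`. -/
theorem singular_value_thresholding {n T : ℕ} (lam : ℝ) (hlam : 0 ≤ lam)
    (M : Matrix (Fin n) (Fin T) ℝ)
    (P : Matrix (Fin n) (Fin n) ℝ) (Q : Matrix (Fin T) (Fin T) ℝ)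
    (v : ℕ → ℝ)
    (hP : Pᵀ * P = 1) (hP' : P * Pᵀ = 1)
    (hQ : Qᵀ * Q = 1) (hQ' : Q * Qᵀ = 1)
    (hv0 : ∀ j, 0 ≤ v j) (hvmono : ∀ j j', j ≤ j' → v j' ≤ v j)
    (hM : M = P * rectDiagonal n T v * Qᵀ) :
    ∀ Pt : Matrix (Fin n) (Fin T) ℝ,
      (1 / 2) * frobeniusNorm
            (M - P * rectDiagonal n T (fun j => max (v j - lam) 0) * Qᵀ) ^ 2 +
          lam * nuclearNorm
            (P * rectDiagonal n T (fun j => max (v j - lam) 0) * Qᵀ) ≤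
        (1 / 2) * frobeniusNorm (M - Pt) ^ 2 + lam * nuclearNorm Pt := by
  intro Pt
  set d : ℕ → ℝ := fun j => max (v j - lam) 0 with hd
  set m : ℕ → ℝ := fun j => min (v j) lam with hm
  set D := P * rectDiagonal n T d * Qᵀ with hD
  set C := P * rectDiagonal n T m * Qᵀ with hC
  have hd0 : ∀ j, 0 ≤ d j := fun j => le_max_right _ _
  have hm0 : ∀ j, 0 ≤ m j := fun j => le_min (hv0 j) hlam
  have hm1 : ∀ j, m j ≤ lam := fun j => min_le_right _ _
  have hMC : M - D = C := by
    rw [hM, hD, hC, ← Matrix.sub_mul, ← Matrix.mul_sub]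
    congr 1
    congr 1
    ext i t
    simp only [rectDiagonal, Matrix.sub_apply, Matrix.of_apply, hd, hm]
    split_ifs with h
    · rcases le_total (v (i : ℕ)) lam with h1 | h1
      · rw [max_eq_right (by linarith), min_eq_left h1]; ring
      · rw [max_eq_left (by linarith), min_eq_right h1]; ring
    · ring
  have hfro : ∀ A : Matrix (Fin n) (Fin T) ℝ, frobeniusNorm A ^ 2 = fip A A := by
    intro A
    unfold frobeniusNorm fip
    rw [Real.sq_sqrt (Finset.sum_nonneg fun i _ => Finset.sum_nonneg fun t _ => sq_nonneg (A i t))]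
    exact Finset.sum_congr rfl fun i _ => Finset.sum_congr rfl fun t _ => sq (A i t) ▸ (sq (A i t)).symm ▸ (pow_two (A i t))
  have hND : nuclearNorm D = ∑ t : Fin T, (if (t : ℕ) < n then d t else 0) :=
    nuclearNorm_PDQ P Q hP hQ d hd0
  have hCD : fip C D = lam * nuclearNorm D := by
    rw [hC, hD, fip_PQ P Q hP hQ, hND, fip_rectDiagonal_left, Finset.mul_sum]
    refine Finset.sum_congr rfl fun t _ => ?_
    split_ifs with h
    · have h2 : rectDiagonal n T d ⟨t, h⟩ t = d t := by
        simp [rectDiagonal]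
      rw [h2, hm, hd]
      simp only
      rcases le_total (v (t : ℕ)) lam with h1 | h1
      · rw [max_eq_right (by linarith)]; ring
      · rw [min_eq_right h1]
    · rw [mul_zero]
  have hCPt : fip C Pt ≤ lam * nuclearNorm Pt :=
    fip_diag_le_nuclear lam hlam P Q hP hP' hQ hQ' m hm0 hm1 Pt
  have hexp : fip (M - Pt) (M - Pt)
      = fip C C + 2 * fip C (D - Pt) + fip (D - Pt) (D - Pt) := by
    apply fip_expand
    intro i t
    have h3 := congrFun (congrFun hMC i) t
    simp only [Matrix.sub_apply] at h3 ⊢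
    linarith
  have h4 : fip C (D - Pt) = fip C D - fip C Pt := fip_sub_right _ _ _
  have h7 : 0 ≤ fip (D - Pt) (D - Pt) := fip_self_nonneg _
  rw [hMC, hfro C, hfro (M - Pt), hexp, h4]
  linarith [hCPt, h7, hCD]
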